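/- Two-step reformulation of the triple splitting scheme: let (p_n, e_n, b_n), n ≥ 0, be generated by the triple splitting scheme with ψ_B ≡ φ_B ≡ 1 and even filter functions ψ_E, φ_E. Then for all n ≥ 1 the electric-field iterates satisfy the two-step recursion e_{n+1} − 2·cos(τΩ)·e_n + e_{n−1} = (τ²/2)·(cos(τΩ) + I)·ψ_E((τ/2)Ω)·G·φ_E((τ/2)Ω)·e_n, where G := −C_B·C_E, and for all n ≥ 0 the magnetic-flux iterates satisfy b_{n+1} = b_n − (τ/2)·C_E·φ_E((τ/2)Ω)·(e_n + e_{n+1}). -/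

import Mathlib

noncomputable def sinc (z : ℝ) : ℝ := if z = 0 then 1 else Real.sin z / z

noncomputable def mulE {d : ℕ} (A : Matrix (Fin d) (Fin d) ℝ)
    (v : EuclideanSpace ℝ (Fin d)) : EuclideanSpace ℝ (Fin d) :=
  (WithLp.equiv 2 (Fin d → ℝ)).symm (A.mulVec ((WithLp.equiv 2 (Fin d → ℝ)) v))

noncomputable def fDiag {d : ℕ} (f : ℝ → ℝ) (s : ℝ) (ωv : Fin d → ℝ) :
    Matrix (Fin d) (Fin d) ℝ :=
  Matrix.diagonal fun i => f (s * ωv i)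

/-- One step of the triple splitting scheme (with `ψ_B ≡ φ_B ≡ 1`),
acting on a state `(p, e, b)`. -/
noncomputable def tripleSplitStep {d : ℕ} (CE CB : Matrix (Fin d) (Fin d) ℝ)
    (ψE φE : ℝ → ℝ) (τ : ℝ) (ωv : Fin d → ℝ)
    (s : EuclideanSpace ℝ (Fin d) × EuclideanSpace ℝ (Fin d) × EuclideanSpace ℝ (Fin d)) :
    EuclideanSpace ℝ (Fin d) × EuclideanSpace ℝ (Fin d) × EuclideanSpace ℝ (Fin d) :=
  let p := s.1
  let e := s.2.1
  let b := s.2.2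
  let bh := b - (τ/2) • mulE CE (mulE (fDiag φE (τ/2) ωv) e)
  let ep := e + (τ/2) • mulE (fDiag ψE (τ/2) ωv) (mulE CB bh)
  let p1 := mulE (fDiag Real.cos τ ωv) p + τ • mulE (fDiag sinc τ ωv) ep
  let em := -mulE (Matrix.diagonal fun i => ωv i * Real.sin (τ * ωv i)) p
              + mulE (fDiag Real.cos τ ωv) ep
  let e1 := em + (τ/2) • mulE (fDiag ψE (τ/2) ωv) (mulE CB bh)
  let b1 := bh - (τ/2) • mulE CE (mulE (fDiag φE (τ/2) ωv) e1)
  (p1, e1, b1)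

section Helpers
variable {d : ℕ}

lemma mulE_add (A : Matrix (Fin d) (Fin d) ℝ) (x y : EuclideanSpace ℝ (Fin d)) :
    mulE A (x + y) = mulE A x + mulE A y := by simp [mulE, Matrix.mulVec_add]

lemma mulE_sub (A : Matrix (Fin d) (Fin d) ℝ) (x y : EuclideanSpace ℝ (Fin d)) :
    mulE A (x - y) = mulE A x - mulE A y := by simp [mulE, Matrix.mulVec_sub]

lemma mulE_smul (A : Matrix (Fin d) (Fin d) ℝ) (c : ℝ) (x : EuclideanSpace ℝ (Fin d)) :
    mulE A (c • x) = c • mulE A x := by simp [mulE, Matrix.mulVec_smul]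

lemma mulE_neg (A : Matrix (Fin d) (Fin d) ℝ) (x : EuclideanSpace ℝ (Fin d)) :
    mulE A (-x) = -mulE A x := by simp [mulE, Matrix.mulVec_neg]

lemma mulE_mulE (A B : Matrix (Fin d) (Fin d) ℝ) (x : EuclideanSpace ℝ (Fin d)) :
    mulE (A * B) x = mulE A (mulE B x) := by simp [mulE, Matrix.mulVec_mulVec]

lemma mulE_addM (A B : Matrix (Fin d) (Fin d) ℝ) (x : EuclideanSpace ℝ (Fin d)) :
    mulE (A + B) x = mulE A x + mulE B x := by simp [mulE, Matrix.add_mulVec]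

lemma mulE_negM (A : Matrix (Fin d) (Fin d) ℝ) (x : EuclideanSpace ℝ (Fin d)) :
    mulE (-A) x = -mulE A x := by simp [mulE, Matrix.neg_mulVec]

lemma mulE_one (x : EuclideanSpace ℝ (Fin d)) : mulE (1 : Matrix (Fin d) (Fin d) ℝ) x = x := by
  simp [mulE]

lemma mulE_diag_apply (g : Fin d → ℝ) (x : EuclideanSpace ℝ (Fin d)) (i : Fin d) :
    mulE (Matrix.diagonal g) x i = g i * x i := by
  simp [mulE, Matrix.mulVec_diagonal]

lemma mulE_diag_comm (g h : Fin d → ℝ) (x : EuclideanSpace ℝ (Fin d)) :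
    mulE (Matrix.diagonal g) (mulE (Matrix.diagonal h) x)
      = mulE (Matrix.diagonal h) (mulE (Matrix.diagonal g) x) := by
  ext i; simp only [mulE_diag_apply]; ring

lemma comm_SC (τ : ℝ) (ωv : Fin d → ℝ) (x : EuclideanSpace ℝ (Fin d)) :
    mulE (Matrix.diagonal fun i => ωv i * Real.sin (τ * ωv i)) (mulE (fDiag Real.cos τ ωv) x)
      = mulE (fDiag Real.cos τ ωv) (mulE (Matrix.diagonal fun i => ωv i * Real.sin (τ * ωv i)) x) := by
  unfold fDiag; exact mulE_diag_comm _ _ _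

lemma key (τ : ℝ) (ωv : Fin d → ℝ) (x : EuclideanSpace ℝ (Fin d)) :
    τ • mulE (Matrix.diagonal fun i => ωv i * Real.sin (τ * ωv i)) (mulE (fDiag sinc τ ωv) x)
      = x - mulE (fDiag Real.cos τ ωv) (mulE (fDiag Real.cos τ ωv) x) := by
  ext i
  have hs : (τ • mulE (Matrix.diagonal fun i => ωv i * Real.sin (τ * ωv i)) (mulE (fDiag sinc τ ωv) x)) i
      = τ * ((ωv i * Real.sin (τ * ωv i)) * (sinc (τ * ωv i) * x i)) := by
    rw [PiLp.smul_apply, smul_eq_mul, mulE_diag_apply]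
    simp only [fDiag, mulE_diag_apply]
  have hr : (x - mulE (fDiag Real.cos τ ωv) (mulE (fDiag Real.cos τ ωv) x)) i
      = x i - Real.cos (τ * ωv i) * (Real.cos (τ * ωv i) * x i) := by
    rw [PiLp.sub_apply]
    simp only [fDiag, mulE_diag_apply]
  rw [hs, hr]
  rcases eq_or_ne (τ * ωv i) 0 with h | h
  · rcases mul_eq_zero.mp h with h' | h'
    · simp [h']
    · simp [h']
  · have hsin : sinc (τ * ωv i) = Real.sin (τ * ωv i) / (τ * ωv i) := by simp [sinc, h]
    rw [hsin]
    have h1 := Real.sin_sq_add_cos_sq (τ * ωv i)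
    have hinv := mul_inv_cancel₀ h
    rw [div_eq_mul_inv]
    linear_combination (x i) * h1 + (Real.sin (τ * ωv i) ^ 2 * x i) * hinv

lemma Sd_p1 (τ : ℝ) (ωv : Fin d → ℝ) (p ep : EuclideanSpace ℝ (Fin d)) :
    mulE (Matrix.diagonal fun i => ωv i * Real.sin (τ * ωv i))
        (mulE (fDiag Real.cos τ ωv) p + τ • mulE (fDiag sinc τ ωv) ep)
      = mulE (fDiag Real.cos τ ωv)
          (mulE (Matrix.diagonal fun i => ωv i * Real.sin (τ * ωv i)) p)
        + (ep - mulE (fDiag Real.cos τ ωv) (mulE (fDiag Real.cos τ ωv) ep)) := by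
  rw [mulE_add, mulE_smul, key, comm_SC]

end Helpers

section Steps
variable {d : ℕ} (CE CB : Matrix (Fin d) (Fin d) ℝ) (ψE φE : ℝ → ℝ) (τ : ℝ) (ωv : Fin d → ℝ)

noncomputable def stE (p e b : EuclideanSpace ℝ (Fin d)) : EuclideanSpace ℝ (Fin d) :=
  -mulE (Matrix.diagonal fun i => ωv i * Real.sin (τ * ωv i)) p
    + mulE (fDiag Real.cos τ ωv)
        (e + (τ/2) • mulE (fDiag ψE (τ/2) ωv)
          (mulE CB (b - (τ/2) • mulE CE (mulE (fDiag φE (τ/2) ωv) e))))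
    + (τ/2) • mulE (fDiag ψE (τ/2) ωv)
        (mulE CB (b - (τ/2) • mulE CE (mulE (fDiag φE (τ/2) ωv) e)))

noncomputable def stP (p e b : EuclideanSpace ℝ (Fin d)) : EuclideanSpace ℝ (Fin d) :=
  mulE (fDiag Real.cos τ ωv) p
    + τ • mulE (fDiag sinc τ ωv)
        (e + (τ/2) • mulE (fDiag ψE (τ/2) ωv)
          (mulE CB (b - (τ/2) • mulE CE (mulE (fDiag φE (τ/2) ωv) e))))

noncomputable def stB (p e b : EuclideanSpace ℝ (Fin d)) : EuclideanSpace ℝ (Fin d) :=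
  (b - (τ/2) • mulE CE (mulE (fDiag φE (τ/2) ωv) e))
    - (τ/2) • mulE CE (mulE (fDiag φE (τ/2) ωv) (stE CE CB ψE φE τ ωv p e b))

lemma step_eq (x : EuclideanSpace ℝ (Fin d) × EuclideanSpace ℝ (Fin d) × EuclideanSpace ℝ (Fin d)) :
    tripleSplitStep CE CB ψE φE τ ωv x
      = (stP CE CB ψE φE τ ωv x.1 x.2.1 x.2.2,
         stE CE CB ψE φE τ ωv x.1 x.2.1 x.2.2,
         stB CE CB ψE φE τ ωv x.1 x.2.1 x.2.2) := rfl

end Steps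
section Core
variable {d : ℕ} (CE CB : Matrix (Fin d) (Fin d) ℝ) (ψE φE : ℝ → ℝ) (τ : ℝ) (ωv : Fin d → ℝ)

lemma bstep (p e b : EuclideanSpace ℝ (Fin d)) :
    stB CE CB ψE φE τ ωv p e b
      = b - (τ/2) • mulE CE (mulE (fDiag φE (τ/2) ωv) (e + stE CE CB ψE φE τ ωv p e b)) := by
  simp only [stB, mulE_add, smul_add]
  module

lemma estep2 (p e b : EuclideanSpace ℝ (Fin d)) :
    stE CE CB ψE φE τ ωv (stP CE CB ψE φE τ ωv p e b) (stE CE CB ψE φE τ ωv p e b)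
        (stB CE CB ψE φE τ ωv p e b)
      - (2 : ℝ) • mulE (fDiag Real.cos τ ωv) (stE CE CB ψE φE τ ωv p e b)
      + e
    = (τ^2/2) • mulE ((fDiag Real.cos τ ωv + 1) * fDiag ψE (τ/2) ωv
          * (-(CB * CE)) * fDiag φE (τ/2) ωv) (stE CE CB ψE φE τ ωv p e b) := by
  simp only [stE, stP, stB]
  rw [Sd_p1]
  simp only [mulE_mulE, mulE_addM, mulE_negM, mulE_one, mulE_add, mulE_sub, mulE_smul,
    mulE_neg, comm_SC, smul_add, smul_sub, smul_neg]
  module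

end Core

/-- Two-step reformulation of the triple splitting scheme:
for the iterates `(p_n, e_n, b_n)` of the triple splitting scheme with `ψ_B ≡ φ_B ≡ 1`,
for all `n ≥ 1` the electric-field iterates satisfy
`e_{n+1} − 2·cos(τΩ)·e_n + e_{n−1} = (τ²/2)·(cos(τΩ)+I)·ψ_E((τ/2)Ω)·G·φ_E((τ/2)Ω)·e_n`
(here stated with the index shifted, `n ↦ n+1`), and for all `n ≥ 0` the magnetic-flux
iterates satisfy `b_{n+1} = b_n − (τ/2)·C_E·φ_E((τ/2)Ω)·(e_n + e_{n+1})`. -/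
theorem stmt9
    (d : ℕ) (hd : 1 ≤ d)
    (CE CB : Matrix (Fin d) (Fin d) ℝ)
    (ωv : Fin d → ℝ) (hωv : ∀ i, 0 ≤ ωv i)
    (ψE φE : ℝ → ℝ)
    (hψeven : ∀ z, ψE (-z) = ψE z) (hφeven : ∀ z, φE (-z) = φE z)
    (hψ0 : ψE 0 = 1) (hφ0 : φE 0 = 1)
    (τ : ℝ) (hτ : 0 < τ)
    (p0 e0 b0 : EuclideanSpace ℝ (Fin d)) :
    (∀ n : ℕ,
      ((tripleSplitStep CE CB ψE φE τ ωv)^[n + 2] (p0, e0, b0)).2.1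
        - (2 : ℝ) • mulE (fDiag Real.cos τ ωv)
            (((tripleSplitStep CE CB ψE φE τ ωv)^[n + 1] (p0, e0, b0)).2.1)
        + ((tripleSplitStep CE CB ψE φE τ ωv)^[n] (p0, e0, b0)).2.1
      = (τ^2/2) • mulE ((fDiag Real.cos τ ωv + 1) * fDiag ψE (τ/2) ωv
            * (-(CB * CE)) * fDiag φE (τ/2) ωv)
          (((tripleSplitStep CE CB ψE φE τ ωv)^[n + 1] (p0, e0, b0)).2.1)) ∧
    (∀ n : ℕ,
      ((tripleSplitStep CE CB ψE φE τ ωv)^[n + 1] (p0, e0, b0)).2.2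
      = ((tripleSplitStep CE CB ψE φE τ ωv)^[n] (p0, e0, b0)).2.2
        - (τ/2) • mulE CE (mulE (fDiag φE (τ/2) ωv)
            (((tripleSplitStep CE CB ψE φE τ ωv)^[n] (p0, e0, b0)).2.1
             + ((tripleSplitStep CE CB ψE φE τ ωv)^[n + 1] (p0, e0, b0)).2.1))) := by
  constructor
  · intro n
    have h2 : n + 2 = (n + 1) + 1 := rfl
    rw [h2, Function.iterate_succ_apply', Function.iterate_succ_apply', step_eq, step_eq]
    exact estep2 CE CB ψE φE τ ωv _ _ _
  · intro n
    rw [Function.iterate_succ_apply', step_eq]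
    exact bstep CE CB ψE φE τ ωv _ _ _
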